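/- arXiv:2403.12292 — 2 statements merged into one kernel-verified Lean document; each statement's English description precedes it below -/
import Mathlib

section
/- Let n ≥ 2, p > 1/n, and 0 < r < 1. Let M be a positive definite symmetric n×n real matrix with eigenvalues λ₁ ≤ λ₂ ≤ ⋯ ≤ λ_n, let e be a unit vector, and suppose there are constants c₀, C₀ > 0 such that: c₀ r^{−1/p} ≤ det M ≤ C₀ r^{−1/p}; ‖M‖ ≤ C₀ r^{−1}; eᵀ M e ≤ C₀ r^{n−1−1/p}; and ξᵀ M ξ ≥ c₀ r^{−1} for every unit vector ξ orthogonal to e. Then there is C > 0 depending only on n, p, c₀, C₀ such that C^{−1} r^{n−1−1/p} ≤ λ₁ ≤ C r^{n−1−1/p} and C^{−1} r^{−1} ≤ λ_i ≤ C r^{−1} for i = 2, …, n. -/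
open Set Filter Metric Topology
open scoped RealInnerProductSpace

noncomputable section

/-- Operator norm of a matrix acting on Euclidean space. -/
def matNorm {n : ℕ} (M : Matrix (Fin n) (Fin n) ℝ) : ℝ :=
  ‖Matrix.toEuclideanCLM (𝕜 := ℝ) M‖

/-- The quadratic form `ξ ↦ ξᵀ M ξ` of a matrix on Euclidean space. -/
def quadForm {n : ℕ} (M : Matrix (Fin n) (Fin n) ℝ) (ξ : EuclideanSpace ℝ (Fin n)) : ℝ :=
  ∑ i, ∑ j, ξ i * M i j * ξ j

lemma quadForm_eq_inner {n : ℕ} (M : Matrix (Fin n) (Fin n) ℝ) (ξ : EuclideanSpace ℝ (Fin n)) :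
    quadForm M ξ = ⟪ξ, Matrix.toEuclideanLin M ξ⟫ := by
  rw [PiLp.inner_apply]
  refine Finset.sum_congr rfl fun i _ => ?_
  simp only [RCLike.inner_apply, conj_trivial, Matrix.toEuclideanLin_apply]
  show (∑ j, ξ i * M i j * ξ j) = (M.mulVec (WithLp.ofLp ξ)) i * ξ i
  rw [Matrix.mulVec, dotProduct, Finset.sum_mul]
  exact Finset.sum_congr rfl fun j _ => by show _ = (M i j * ξ j) * ξ i; ring

lemma eigen_apply {n : ℕ} {M : Matrix (Fin n) (Fin n) ℝ} (hM : M.IsHermitian) (i : Fin n) :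
    Matrix.toEuclideanLin M (hM.eigenvectorBasis i) = hM.eigenvalues i • hM.eigenvectorBasis i := by
  have h := hM.mulVec_eigenvectorBasis i
  apply (WithLp.equiv 2 _).injective
  simpa [Matrix.toEuclideanLin_apply] using h

lemma quadForm_spectral {n : ℕ} {M : Matrix (Fin n) (Fin n) ℝ} (hM : M.IsHermitian)
    (ξ : EuclideanSpace ℝ (Fin n)) :
    quadForm M ξ = ∑ i, hM.eigenvalues i * ⟪hM.eigenvectorBasis i, ξ⟫ ^ 2 := by
  rw [quadForm_eq_inner,
    ← OrthonormalBasis.sum_inner_mul_inner hM.eigenvectorBasis ξ (Matrix.toEuclideanLin M ξ)]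
  refine Finset.sum_congr rfl fun i _ => ?_
  have hsym := (Matrix.isHermitian_iff_isSymmetric.mp hM)
  have h1 : ⟪hM.eigenvectorBasis i, Matrix.toEuclideanLin M ξ⟫
      = hM.eigenvalues i * ⟪hM.eigenvectorBasis i, ξ⟫ := by
    rw [← hsym, eigen_apply hM i, inner_smul_left]
    simp
  rw [h1, real_inner_comm]
  ring

lemma parseval_sq {n : ℕ} {M : Matrix (Fin n) (Fin n) ℝ} (hM : M.IsHermitian)
    (ξ : EuclideanSpace ℝ (Fin n)) :
    ∑ i, ⟪hM.eigenvectorBasis i, ξ⟫ ^ 2 = ‖ξ‖ ^ 2 := by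
  have := OrthonormalBasis.sum_inner_mul_inner hM.eigenvectorBasis ξ ξ
  rw [real_inner_self_eq_norm_sq] at this
  rw [← this]
  exact Finset.sum_congr rfl fun i _ => by rw [real_inner_comm]; ring

lemma eigenvalue_le_matNorm {n : ℕ} {M : Matrix (Fin n) (Fin n) ℝ} (hM : M.IsHermitian)
    (i : Fin n) : hM.eigenvalues i ≤ matNorm M := by
  have hv : ‖hM.eigenvectorBasis i‖ = 1 := hM.eigenvectorBasis.orthonormal.1 i
  have h1 : Matrix.toEuclideanCLM (𝕜 := ℝ) M (hM.eigenvectorBasis i)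
      = hM.eigenvalues i • hM.eigenvectorBasis i := by
    have : Matrix.toEuclideanCLM (𝕜 := ℝ) M (hM.eigenvectorBasis i)
        = Matrix.toEuclideanLin M (hM.eigenvectorBasis i) := by
      rw [← Matrix.coe_toEuclideanCLM_eq_toEuclideanLin]; rfl
    rw [this, eigen_apply hM i]
  calc hM.eigenvalues i ≤ |hM.eigenvalues i| := le_abs_self _
    _ = ‖Matrix.toEuclideanCLM (𝕜 := ℝ) M (hM.eigenvectorBasis i)‖ := by
        rw [h1, norm_smul, hv, mul_one, Real.norm_eq_abs]
    _ ≤ matNorm M * ‖hM.eigenvectorBasis i‖ :=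
        (Matrix.toEuclideanCLM (𝕜 := ℝ) M).le_opNorm _
    _ = matNorm M := by rw [hv, mul_one]



lemma exists_unit_perp_quad_le {n : ℕ} {M : Matrix (Fin n) (Fin n) ℝ} (hM : M.IsHermitian)
    (e : EuclideanSpace ℝ (Fin n)) (j k : Fin n) (hjk : j ≠ k)
    (lamk : ℝ) (hj : hM.eigenvalues j ≤ lamk) (hk : hM.eigenvalues k ≤ lamk) :
    ∃ ξ : EuclideanSpace ℝ (Fin n), ‖ξ‖ = 1 ∧ ⟪ξ, e⟫ = 0 ∧ quadForm M ξ ≤ lamk := by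
  set v := hM.eigenvectorBasis with hv
  have hortho : ∀ a b : Fin n, ⟪v a, v b⟫ = if a = b then 1 else 0 :=
    orthonormal_iff_ite.mp v.orthonormal
  set a := ⟪v j, e⟫ with ha
  set b := ⟪v k, e⟫ with hb
  by_cases hab : a = 0 ∧ b = 0
  · refine ⟨v j, v.orthonormal.1 j, hab.1, ?_⟩
    rw [quadForm_spectral hM]
    have : ∀ m, hM.eigenvalues m * ⟪v m, v j⟫ ^ 2
        = if m = j then hM.eigenvalues j * 1 else 0 := by
      intro m; rw [hortho]; by_cases h : m = j <;> simp [h]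
    rw [Finset.sum_congr rfl fun m _ => this m, Finset.sum_ite_eq']
    simpa using hj
  · set S := a ^ 2 + b ^ 2 with hSdef
    have hS : 0 < S := by
      rcases not_and_or.mp hab with h | h <;> positivity
    set t := (Real.sqrt S)⁻¹ with htdef
    have ht : t ^ 2 * S = 1 := by
      rw [htdef, inv_pow, Real.sq_sqrt hS.le, inv_mul_cancel₀ hS.ne']
    set ξ : EuclideanSpace ℝ (Fin n) := t • (b • v j - a • v k) with hξdef
    have hc : ∀ m, ⟪v m, ξ⟫ = t * ((if m = j then b else 0) - (if m = k then a else 0)) := by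
      intro m
      rw [hξdef, inner_smul_right, inner_sub_right, inner_smul_right, inner_smul_right,
        hortho m j, hortho m k]
      by_cases h1 : m = j <;> by_cases h2 : m = k <;> simp [h1, h2]
    have hc2 : ∀ m, ⟪v m, ξ⟫ ^ 2 = t ^ 2 * b ^ 2 * (if m = j then 1 else 0)
        + t ^ 2 * a ^ 2 * (if m = k then 1 else 0) := by
      intro m
      rw [hc m]
      by_cases h1 : m = j <;> by_cases h2 : m = k
      · exact absurd (h1.symm.trans h2) hjk
      all_goals (simp [h1, h2, hjk, hjk.symm]; try ring)
    have hsum : ∀ (f : Fin n → ℝ), ∑ m, f m * ⟪v m, ξ⟫ ^ 2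
        = t ^ 2 * b ^ 2 * f j + t ^ 2 * a ^ 2 * f k := by
      intro f
      have hterm : ∀ m, f m * ⟪v m, ξ⟫ ^ 2
          = (if m = j then t ^ 2 * b ^ 2 * f m else 0)
            + (if m = k then t ^ 2 * a ^ 2 * f m else 0) := by
        intro m; rw [hc2 m]
        by_cases h1 : m = j <;> by_cases h2 : m = k <;>
          simp [h1, h2, hjk, hjk.symm] <;> try ring
      rw [Finset.sum_congr rfl fun m _ => hterm m, Finset.sum_add_distrib,
        Finset.sum_ite_eq' Finset.univ j, Finset.sum_ite_eq' Finset.univ k]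
      simp
    have hnorm : ‖ξ‖ = 1 := by
      have h1 : ‖ξ‖ ^ 2 = 1 := by
        rw [← parseval_sq hM ξ]
        have := hsum fun _ => 1
        simp only [mul_one] at this
        rw [Finset.sum_congr rfl fun m _ => (one_mul (⟪v m, ξ⟫ ^ 2)).symm, this]
        rw [hSdef] at ht
        linarith [ht]
      nlinarith [norm_nonneg ξ, h1]
    have hperp : ⟪ξ, e⟫ = 0 := by
      rw [hξdef, inner_smul_left, inner_sub_left, inner_smul_left, inner_smul_left]
      simp only [conj_trivial, ← ha, ← hb]
      ring
    refine ⟨ξ, hnorm, hperp, ?_⟩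
    rw [quadForm_spectral hM, hsum hM.eigenvalues]
    have hone : t ^ 2 * b ^ 2 + t ^ 2 * a ^ 2 = 1 := by
      rw [hSdef] at ht; linear_combination ht
    calc t ^ 2 * b ^ 2 * hM.eigenvalues j + t ^ 2 * a ^ 2 * hM.eigenvalues k
        ≤ t ^ 2 * b ^ 2 * lamk + t ^ 2 * a ^ 2 * lamk :=
          add_le_add (mul_le_mul_of_nonneg_left hj (by positivity))
            (mul_le_mul_of_nonneg_left hk (by positivity))
      _ = lamk := by linear_combination lamk * hone


/-- Corollary 3.3 of the paper: eigenvalue asymptotics for the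
Hessian of the dual flow: `λ₁ ≈ r^{n-1-1/p}` and `λ₂ ≈ ⋯ ≈ λ_n ≈ r^{-1}`. -/
theorem stmt8
    (n : ℕ) (hn : 2 ≤ n) (p : ℝ) (hp : 1 / n < p)
    (c₀ C₀ : ℝ) (hc₀ : 0 < c₀) (hC₀ : 0 < C₀) :
    ∃ C > 0, ∀ (r : ℝ), 0 < r → r < 1 →
      ∀ (M : Matrix (Fin n) (Fin n) ℝ) (hM : M.IsHermitian), M.PosDef →
      ∀ (e : EuclideanSpace ℝ (Fin n)), ‖e‖ = 1 →
      ∀ lam : Fin n → ℝ, Monotone lam →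
      (∃ σ : Equiv.Perm (Fin n), ∀ i, lam i = hM.eigenvalues (σ i)) →
      -- c₀ r^{-1/p} ≤ det M ≤ C₀ r^{-1/p}
      c₀ * r ^ (-(1 / p)) ≤ M.det → M.det ≤ C₀ * r ^ (-(1 / p)) →
      -- ‖M‖ ≤ C₀ r^{-1}
      matNorm M ≤ C₀ * r⁻¹ →
      -- eᵀ M e ≤ C₀ r^{n-1-1/p}
      quadForm M e ≤ C₀ * r ^ ((n:ℝ) - 1 - 1 / p) →
      -- ξᵀ M ξ ≥ c₀ r⁻¹ for unit ξ ⟂ e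
      (∀ ξ : EuclideanSpace ℝ (Fin n), ‖ξ‖ = 1 → ⟪ξ, e⟫ = 0 → c₀ * r⁻¹ ≤ quadForm M ξ) →
      -- conclusions
      (C⁻¹ * r ^ ((n:ℝ) - 1 - 1 / p) ≤ lam ⟨0, by omega⟩ ∧
        lam ⟨0, by omega⟩ ≤ C * r ^ ((n:ℝ) - 1 - 1 / p)) ∧
      ∀ i : Fin n, i ≠ ⟨0, by omega⟩ → C⁻¹ * r⁻¹ ≤ lam i ∧ lam i ≤ C * r⁻¹ := by
  classical
  have hCpos : 0 < C₀ + C₀ ^ (n - 1) / c₀ + 1 / c₀ := by positivity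
  refine ⟨C₀ + C₀ ^ (n - 1) / c₀ + 1 / c₀, hCpos, ?_⟩
  set C := C₀ + C₀ ^ (n - 1) / c₀ + 1 / c₀ with hCdef
  intro r hr hr1 M hM hMpd e he lam hmono hex hdet1 hdet2 hnormM hqe hperp
  obtain ⟨σ, hσ⟩ := hex
  have hC0C : C₀ ≤ C := by
    have h1 : 0 < C₀ ^ (n - 1) / c₀ := by positivity
    have h2 : 0 < 1 / c₀ := by positivity
    rw [hCdef]; linarith
  have hCinv1 : C⁻¹ ≤ c₀ := by
    have h1 : 1 / c₀ ≤ C := by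
      rw [hCdef]
      have : 0 < C₀ ^ (n - 1) / c₀ := by positivity
      linarith
    calc C⁻¹ ≤ (1 / c₀)⁻¹ := inv_anti₀ (by positivity) h1
      _ = c₀ := by rw [one_div, inv_inv]
  have hCinv2 : C⁻¹ ≤ c₀ / C₀ ^ (n - 1) := by
    have h1 : C₀ ^ (n - 1) / c₀ ≤ C := by
      rw [hCdef]
      have : 0 < 1 / c₀ := by positivity
      linarith
    calc C⁻¹ ≤ (C₀ ^ (n - 1) / c₀)⁻¹ := inv_anti₀ (by positivity) h1
      _ = c₀ / C₀ ^ (n - 1) := by rw [inv_div]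
  set i₀ : Fin n := ⟨0, by omega⟩ with hi₀
  set i₁ : Fin n := ⟨1, by omega⟩ with hi₁
  have hμpos : ∀ m, 0 < hM.eigenvalues m := fun m => hMpd.eigenvalues_pos m
  have hlampos : ∀ i, 0 < lam i := fun i => (hσ i) ▸ hμpos (σ i)
  have hlam0_le : ∀ m, lam i₀ ≤ hM.eigenvalues m := by
    intro m
    have h := hmono (show i₀ ≤ σ.symm m from Fin.le_def.mpr (Nat.zero_le _))
    rwa [hσ (σ.symm m), Equiv.apply_symm_apply] at h
  have hlam_le_norm : ∀ i, lam i ≤ C₀ * r⁻¹ := fun i => by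
    rw [hσ i]; exact (eigenvalue_le_matNorm hM (σ i)).trans hnormM
  have hquad_ge : lam i₀ ≤ quadForm M e := by
    rw [quadForm_spectral hM e]
    calc lam i₀ = lam i₀ * ‖e‖ ^ 2 := by rw [he]; ring
      _ = ∑ m, lam i₀ * ⟪hM.eigenvectorBasis m, e⟫ ^ 2 := by
          rw [← parseval_sq hM e, Finset.mul_sum]
      _ ≤ ∑ m, hM.eigenvalues m * ⟪hM.eigenvectorBasis m, e⟫ ^ 2 :=
          Finset.sum_le_sum fun m _ =>
            mul_le_mul_of_nonneg_right (hlam0_le m) (sq_nonneg _)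
  have hσne : σ i₀ ≠ σ i₁ := by
    intro h
    have h2 := σ.injective h
    have h3 : (0 : ℕ) = 1 := congrArg Fin.val h2
    omega
  have h01 : lam i₀ ≤ lam i₁ := hmono (Fin.le_def.mpr (Nat.zero_le _))
  obtain ⟨ξ, hξ1, hξ2, hξ3⟩ := exists_unit_perp_quad_le hM e (σ i₀) (σ i₁) hσne (lam i₁)
    (by rw [← hσ]; exact h01) (le_of_eq (hσ i₁).symm)
  have hlam1 : c₀ * r⁻¹ ≤ lam i₁ := (hperp ξ hξ1 hξ2).trans hξ3
  have hprod : ∏ i, lam i = M.det := by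
    rw [hM.det_eq_prod_eigenvalues, Finset.prod_congr rfl fun i _ => hσ i]
    simpa using Equiv.prod_comp σ hM.eigenvalues
  set Q := (C₀ * r⁻¹) ^ (n - 1) with hQdef
  have hQpos : 0 < Q := by rw [hQdef]; positivity
  have hrest : ∏ i ∈ Finset.univ.erase i₀, lam i ≤ Q := by
    calc ∏ i ∈ Finset.univ.erase i₀, lam i
        ≤ ∏ _i ∈ Finset.univ.erase i₀, (C₀ * r⁻¹) :=
          Finset.prod_le_prod (fun i _ => (hlampos i).le) (fun i _ => hlam_le_norm i)
      _ = Q := by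
          rw [Finset.prod_const, Finset.card_erase_of_mem (Finset.mem_univ _),
            Finset.card_univ, Fintype.card_fin, hQdef]
  have hdet_le : M.det ≤ lam i₀ * Q := by
    rw [← hprod, ← Finset.mul_prod_erase Finset.univ lam (Finset.mem_univ i₀)]
    exact mul_le_mul_of_nonneg_left hrest (hlampos i₀).le
  have hn1 : ((n : ℝ) - 1) = ((n - 1 : ℕ) : ℝ) := by
    rw [Nat.cast_sub (by omega : 1 ≤ n)]; norm_num
  have hR : r ^ ((n:ℝ) - 1 - 1 / p) * Q = C₀ ^ (n - 1) * r ^ (-(1 / p)) := by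
    have h1 : r ^ ((n:ℝ) - 1 - 1 / p) = r ^ (n - 1 : ℕ) * r ^ (-(1 / p)) := by
      rw [show (n:ℝ) - 1 - 1 / p = ((n - 1 : ℕ) : ℝ) + (-(1 / p)) by rw [← hn1]; ring,
        Real.rpow_add hr, Real.rpow_natCast]
    rw [h1, hQdef, mul_pow, inv_pow]
    have hrn : (r : ℝ) ^ (n - 1 : ℕ) ≠ 0 := pow_ne_zero _ hr.ne'
    field_simp
  have hrpow_pos : 0 < r ^ ((n:ℝ) - 1 - 1 / p) := Real.rpow_pos_of_pos hr _
  have hlow : C⁻¹ * r ^ ((n:ℝ) - 1 - 1 / p) ≤ lam i₀ := by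
    have h2 : c₀ / C₀ ^ (n - 1) * r ^ ((n:ℝ) - 1 - 1 / p) ≤ lam i₀ := by
      refine le_of_mul_le_mul_right ?_ hQpos
      calc c₀ / C₀ ^ (n - 1) * r ^ ((n:ℝ) - 1 - 1 / p) * Q
          = c₀ * (r ^ ((n:ℝ) - 1 - 1 / p) * Q) / C₀ ^ (n - 1) := by ring
        _ = c₀ * (C₀ ^ (n - 1) * r ^ (-(1 / p))) / C₀ ^ (n - 1) := by rw [hR]
        _ = c₀ * r ^ (-(1 / p)) := by
            have hC0n : (C₀ : ℝ) ^ (n - 1) ≠ 0 := pow_ne_zero _ hC₀.ne'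
            field_simp
        _ ≤ M.det := hdet1
        _ ≤ lam i₀ * Q := hdet_le
    calc C⁻¹ * r ^ ((n:ℝ) - 1 - 1 / p)
        ≤ c₀ / C₀ ^ (n - 1) * r ^ ((n:ℝ) - 1 - 1 / p) :=
          mul_le_mul_of_nonneg_right hCinv2 hrpow_pos.le
      _ ≤ lam i₀ := h2
  have hhigh : lam i₀ ≤ C * r ^ ((n:ℝ) - 1 - 1 / p) :=
    hquad_ge.trans (hqe.trans (mul_le_mul_of_nonneg_right hC0C hrpow_pos.le))
  refine ⟨⟨hlow, hhigh⟩, ?_⟩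
  intro i hi
  have h1i : i₁ ≤ i := by
    have hvi : i.val ≠ 0 := fun h => hi (Fin.ext h)
    exact Fin.le_def.mpr (show 1 ≤ i.val by omega)
  constructor
  · calc C⁻¹ * r⁻¹ ≤ c₀ * r⁻¹ :=
        mul_le_mul_of_nonneg_right hCinv1 (inv_nonneg.mpr hr.le)
      _ ≤ lam i₁ := hlam1
      _ ≤ lam i := hmono h1i
  · exact (hlam_le_norm i).trans
      (mul_le_mul_of_nonneg_right hC0C (inv_nonneg.mpr hr.le))
end
end

section
/- Let n ≥ 2, p > 1/n, T > 0. Let u : B₁(0) × [0,T] → ℝ be parabolically convex with u(0,t) = 0, twice differentiable in x away from the origin, and suppose there is C₀ > 0 such that the radial second derivative satisfies C₀^{−1}|x|^{n−1−1/p} ≤ u_{rr}(x,t) ≤ C₀|x|^{n−1−1/p} for all 0 < |x| < 1 and t ∈ [0,T]. Let φ(x,t) = lim_{λ→0⁺} u(λx,t)/λ be the tangent cone of u(·,t) at the origin and set w = u − φ. Then there is C > 0 depending only on n, p, C₀ such that C^{−1}|x|^{n+1−1/p} ≤ w(x,t) ≤ C|x|^{n+1−1/p} for all 0 < |x| < 1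 and t ∈ [0,T]. -/
open Set Filter Metric Topology
open scoped RealInnerProductSpace

noncomputable section

/-- The spatial Hessian matrix of `f` at `x`. -/
def hess {n : ℕ} (f : EuclideanSpace ℝ (Fin n) → ℝ) (x : EuclideanSpace ℝ (Fin n)) :
    Matrix (Fin n) (Fin n) ℝ :=
  Matrix.of fun i j =>
    fderiv ℝ (fun y => fderiv ℝ f y (EuclideanSpace.single j 1)) x (EuclideanSpace.single i 1)

/-- The radial second derivative `u_{rr}(x,t) = Σ_{ij} x_i x_j u_{ij}(x,t) / |x|²`. -/
def urr {n : ℕ} (u : EuclideanSpace ℝ (Fin n) → ℝ → ℝ)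
    (x : EuclideanSpace ℝ (Fin n)) (t : ℝ) : ℝ :=
  (∑ i, ∑ j, x i * x j * hess (fun y => u y t) x i j) / ‖x‖ ^ 2

/-- A coordinate representation of a vector in Euclidean space. -/
lemma stmt9_xrep {n : ℕ} (x : EuclideanSpace ℝ (Fin n)) :
    x = ∑ i, x i • EuclideanSpace.single i (1:ℝ) := by
  have := (EuclideanSpace.basisFun (Fin n) ℝ).sum_repr x
  simp only [EuclideanSpace.basisFun_apply, EuclideanSpace.basisFun_repr] at this
  exact this.symm

/-- The Hessian entries are the second `fderiv` evaluated on basis vectors. -/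
lemma stmt9_hess_eq {n : ℕ} (f : EuclideanSpace ℝ (Fin n) → ℝ) (y : EuclideanSpace ℝ (Fin n))
    (hd2 : DifferentiableAt ℝ (fderiv ℝ f) y) (i j : Fin n) :
    hess f y i j = fderiv ℝ (fderiv ℝ f) y (EuclideanSpace.single i 1)
      (EuclideanSpace.single j 1) := by
  show fderiv ℝ (fun z => fderiv ℝ f z (EuclideanSpace.single j 1)) y
      (EuclideanSpace.single i 1) = _
  rw [fderiv_clm_apply hd2 (differentiableAt_const _)]
  simp

/-- Expansion of a continuous bilinear form on coordinates. -/
lemma stmt9_bilin_sum {n : ℕ} (F : EuclideanSpace ℝ (Fin n) →L[ℝ]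
    (EuclideanSpace ℝ (Fin n) →L[ℝ] ℝ)) (x : EuclideanSpace ℝ (Fin n)) :
    F x x = ∑ i, ∑ j, x i * x j *
      (F (EuclideanSpace.single i 1) (EuclideanSpace.single j 1)) := by
  have h : F x x = F (∑ i, x i • EuclideanSpace.single i (1:ℝ))
      (∑ j, x j • EuclideanSpace.single j (1:ℝ)) := by rw [← stmt9_xrep x]
  rw [h]
  simp only [map_sum, map_smul, ContinuousLinearMap.sum_apply,
    ContinuousLinearMap.smul_apply, smul_eq_mul, Finset.sum_apply]
  rw [Finset.sum_comm]
  refine Finset.sum_congr rfl fun i _ => ?_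
  rw [Finset.mul_sum]
  exact Finset.sum_congr rfl fun j _ => by ring

/-- The key one-dimensional comparison lemma: if `g'' ≤ (c l^β)''` on `(0,1)`,
`g(l)/l → φ₀` as `l → 0⁺` and `g` is continuous at `1`, then `g 1 - φ₀ ≤ c`. -/
lemma stmt9_key (g g1 g2 : ℝ → ℝ) (c β φ₀ : ℝ) (hβ : 1 < β)
    (hg1 : ∀ l ∈ Ioo (0:ℝ) 1, HasDerivAt g (g1 l) l)
    (hg2 : ∀ l ∈ Ioo (0:ℝ) 1, HasDerivAt g1 (g2 l) l)
    (hbound : ∀ l ∈ Ioo (0:ℝ) 1, g2 l ≤ c * (β * (β - 1)) * l ^ (β - 2))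
    (hφ : Tendsto (fun l => g l / l) (𝓝[>] (0:ℝ)) (𝓝 φ₀))
    (hgc : ContinuousAt g 1) :
    g 1 - φ₀ ≤ c := by
  set H : ℝ → ℝ := fun l => c * l ^ β - g l with hH
  set H1 : ℝ → ℝ := fun l => c * (β * l ^ (β - 1)) - g1 l with hH1def
  have hH1 : ∀ l ∈ Ioo (0:ℝ) 1, HasDerivAt H (H1 l) l := by
    intro l hl
    exact ((Real.hasDerivAt_rpow_const (Or.inl hl.1.ne')).const_mul c).sub (hg1 l hl)
  have hH2 : ∀ l ∈ Ioo (0:ℝ) 1,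
      HasDerivAt H1 (c * (β * ((β - 1) * l ^ (β - 2))) - g2 l) l := by
    intro l hl
    have h := (Real.hasDerivAt_rpow_const (p := β - 1) (Or.inl hl.1.ne'))
    have h2 : HasDerivAt (fun x : ℝ => c * (β * x ^ (β - 1)))
        (c * (β * ((β - 1) * l ^ (β - 1 - 1)))) l := (h.const_mul β).const_mul c
    have : β - 1 - 1 = β - 2 := by ring
    rw [this] at h2
    exact h2.sub (hg2 l hl)
  have hconv : ConvexOn ℝ (Ioo (0:ℝ) 1) H := by
    apply convexOn_of_deriv2_nonneg (convex_Ioo 0 1)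
    · exact fun l hl => (hH1 l hl).continuousAt.continuousWithinAt
    · rw [interior_Ioo]
      exact fun l hl => (hH1 l hl).differentiableAt.differentiableWithinAt
    · rw [interior_Ioo]
      intro l hl
      have heq : deriv H =ᶠ[𝓝 l] H1 := by
        filter_upwards [Ioo_mem_nhds hl.1 hl.2] with m hm
        exact (hH1 m hm).deriv
      exact ((hH2 l hl).differentiableAt.congr_of_eventuallyEq heq).differentiableWithinAt
    · rw [interior_Ioo]
      intro l hl
      have heq : deriv H =ᶠ[𝓝 l] H1 := by
        filter_upwards [Ioo_mem_nhds hl.1 hl.2] with m hm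
        exact (hH1 m hm).deriv
      have : deriv^[2] H l = c * (β * ((β - 1) * l ^ (β - 2))) - g2 l := by
        show deriv (deriv H) l = _
        rw [heq.deriv_eq]
        exact (hH2 l hl).deriv
      rw [this]
      have hb := hbound l hl
      nlinarith [hb]
  have hH0 : Tendsto H (𝓝[>] (0:ℝ)) (𝓝 0) := by
    have h1 : Tendsto (fun l : ℝ => c * l ^ β) (𝓝[>] (0:ℝ)) (𝓝 0) := by
      have := (Real.continuousAt_rpow_const 0 β (Or.inr (by linarith))).tendsto
      rw [Real.zero_rpow (by linarith : β ≠ 0)] at this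
      have h := (this.const_mul c).mono_left (nhdsWithin_le_nhds (s := Ioi (0:ℝ)))
      simpa using h
    have h2 : Tendsto g (𝓝[>] (0:ℝ)) (𝓝 0) := by
      have hid : Tendsto (fun l : ℝ => l) (𝓝[>] (0:ℝ)) (𝓝 0) :=
        tendsto_id.mono_left nhdsWithin_le_nhds
      have := hφ.mul hid
      rw [mul_zero] at this
      refine this.congr' ?_
      filter_upwards [self_mem_nhdsWithin] with l hl
      exact div_mul_cancel₀ _ (ne_of_gt hl)
    simpa using h1.sub h2
  have hslope : ∀ l₁ ∈ Ioo (0:ℝ) 1, ∀ l₂ ∈ Ioo (0:ℝ) 1, l₁ ≤ l₂ →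
      H l₁ / l₁ ≤ H l₂ / l₂ := by
    intro l₁ hl₁ l₂ hl₂ h12
    have tgen : ∀ a : ℝ, 0 < a → Tendsto (fun ε : ℝ => (H a - H ε) / (a - ε)) (𝓝[>] (0:ℝ))
        (𝓝 (H a / a)) := by
      intro a ha
      have h1 : Tendsto (fun ε : ℝ => H a - H ε) (𝓝[>] (0:ℝ)) (𝓝 (H a - 0)) :=
        tendsto_const_nhds.sub hH0
      have h2 : Tendsto (fun ε : ℝ => a - ε) (𝓝[>] (0:ℝ)) (𝓝 (a - 0)) :=
        tendsto_const_nhds.sub (tendsto_id.mono_left nhdsWithin_le_nhds)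
      have := h1.div h2 (by simpa using ha.ne')
      simpa only [sub_zero, Pi.div_def] using this
    have t1 := tgen l₁ hl₁.1
    have t2 := tgen l₂ hl₂.1
    refine le_of_tendsto_of_tendsto t1 t2 ?_
    filter_upwards [Ioo_mem_nhdsGT_of_mem ⟨le_refl (0:ℝ), hl₁.1⟩] with ε hε
    have hεmem : ε ∈ Ioo (0:ℝ) 1 := ⟨hε.1, hε.2.trans hl₁.2⟩
    exact hconv.secant_mono hεmem hl₁ hl₂ (ne_of_gt hε.2) (ne_of_gt (hε.2.trans_le h12)) h12
  have hr0 : Tendsto (fun l => H l / l) (𝓝[>] (0:ℝ)) (𝓝 (-φ₀)) := by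
    have h1 : Tendsto (fun l : ℝ => c * l ^ (β - 1)) (𝓝[>] (0:ℝ)) (𝓝 0) := by
      have := (Real.continuousAt_rpow_const 0 (β - 1) (Or.inr (by linarith))).tendsto
      rw [Real.zero_rpow (by linarith : β - 1 ≠ 0)] at this
      have h := (this.const_mul c).mono_left (nhdsWithin_le_nhds (s := Ioi (0:ℝ)))
      simpa using h
    have := h1.sub hφ
    rw [zero_sub] at this
    refine this.congr' ?_
    filter_upwards [self_mem_nhdsWithin] with l hl
    have hl0 : (l:ℝ) ≠ 0 := ne_of_gt hl
    show c * l ^ (β - 1) - g l / l = H l / l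
    rw [hH]
    rw [sub_div, Real.rpow_sub_one hl0]
    field_simp
  have hle : ∀ l ∈ Ioo (0:ℝ) 1, -φ₀ ≤ H l / l := by
    intro l hl
    refine le_of_tendsto hr0 ?_
    filter_upwards [Ioo_mem_nhdsGT_of_mem ⟨le_refl (0:ℝ), hl.1⟩] with ε hε
    exact hslope ε ⟨hε.1, hε.2.trans hl.2⟩ l hl hε.2.le
  have hr1 : Tendsto (fun l => H l / l) (𝓝[<] (1:ℝ)) (𝓝 (H 1)) := by
    have hc1 : ContinuousAt H 1 := by
      apply ContinuousAt.sub
      · exact ((Real.continuousAt_rpow_const 1 β (Or.inl one_ne_zero))).const_mul c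
      · exact hgc
    have h1 : Tendsto H (𝓝[<] (1:ℝ)) (𝓝 (H 1)) :=
      hc1.tendsto.mono_left (nhdsWithin_le_nhds (s := Iio (1:ℝ)))
    have h2 : Tendsto (fun l : ℝ => l) (𝓝[<] (1:ℝ)) (𝓝 1) :=
      tendsto_id.mono_left (nhdsWithin_le_nhds (s := Iio (1:ℝ)))
    have := h1.div h2 one_ne_zero
    simpa only [div_one, Pi.div_def] using this
  have hfin : -φ₀ ≤ H 1 := by
    refine ge_of_tendsto hr1 ?_
    filter_upwards [Ioo_mem_nhdsLT_of_mem ⟨zero_lt_one, le_refl (1:ℝ)⟩] with l hl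
    exact hle l hl
  have : H 1 = c - g 1 := by
    rw [hH]; simp [Real.one_rpow]
  rw [this] at hfin
  linarith

/-- estimate (3.18) of the paper: the two-sided growth estimate
`w = u - φ ≈ |x|^{n+1-1/p}` follows from `u_{rr} ≈ |x|^{n-1-1/p}`. -/
theorem stmt9
    (n : ℕ) (hn : 2 ≤ n) (p : ℝ) (hp : 1 / n < p) (C₀ : ℝ) (hC₀ : 0 < C₀) :
    ∃ C > 0, ∀ (T : ℝ), 0 < T →
      ∀ u φ : EuclideanSpace ℝ (Fin n) → ℝ → ℝ,
      -- u is parabolically convex on B₁(0) × [0,T] with u(0,t) = 0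
      (∀ t ∈ Icc (0:ℝ) T, ConvexOn ℝ (ball (0:EuclideanSpace ℝ (Fin n)) 1)
        (fun x => u x t)) →
      (∀ x ∈ ball (0:EuclideanSpace ℝ (Fin n)) 1,
        ∀ t₁ ∈ Icc (0:ℝ) T, ∀ t₂ ∈ Icc (0:ℝ) T, t₁ ≤ t₂ → u x t₂ ≤ u x t₁) →
      (∀ t ∈ Icc (0:ℝ) T, u 0 t = 0) →
      -- u(·,t) is twice differentiable away from the origin
      (∀ x : EuclideanSpace ℝ (Fin n), 0 < ‖x‖ → ‖x‖ < 1 → ∀ t ∈ Icc (0:ℝ) T,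
        DifferentiableAt ℝ (fun y => u y t) x ∧
        DifferentiableAt ℝ (fderiv ℝ (fun y => u y t)) x) →
      -- the two-sided radial Hessian bound
      (∀ x : EuclideanSpace ℝ (Fin n), 0 < ‖x‖ → ‖x‖ < 1 → ∀ t ∈ Icc (0:ℝ) T,
        C₀⁻¹ * ‖x‖ ^ ((n:ℝ) - 1 - 1 / p) ≤ urr u x t ∧
        urr u x t ≤ C₀ * ‖x‖ ^ ((n:ℝ) - 1 - 1 / p)) →
      -- φ(·,t) is the tangent cone of u(·,t) at the origin
      (∀ x ∈ ball (0:EuclideanSpace ℝ (Fin n)) 1, ∀ t ∈ Icc (0:ℝ) T,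
        Tendsto (fun l : ℝ => u (l • x) t / l) (𝓝[>] 0) (𝓝 (φ x t))) →
      -- conclusion: w = u - φ ≈ |x|^{n+1-1/p}
      ∀ x : EuclideanSpace ℝ (Fin n), 0 < ‖x‖ → ‖x‖ < 1 → ∀ t ∈ Icc (0:ℝ) T,
        C⁻¹ * ‖x‖ ^ ((n:ℝ) + 1 - 1 / p) ≤ u x t - φ x t ∧
        u x t - φ x t ≤ C * ‖x‖ ^ ((n:ℝ) + 1 - 1 / p) := by
  have hn2 : (2:ℝ) ≤ (n:ℝ) := by exact_mod_cast hn
  have hn0 : (0:ℝ) < (n:ℝ) := by linarith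
  have hp0 : 0 < p := lt_trans (by positivity) hp
  have h1p : 1 / p < (n:ℝ) := by
    rw [div_lt_iff₀ hp0]
    rw [div_lt_iff₀ hn0] at hp
    nlinarith
  set β : ℝ := (n:ℝ) + 1 - 1 / p with hβdef
  have hβ : 1 < β := by simp only [hβdef]; linarith
  set K : ℝ := β * (β - 1) with hKdef
  have hK : 0 < K := by
    apply mul_pos <;> linarith
  refine ⟨C₀ * K + C₀ / K, add_pos (mul_pos hC₀ hK) (div_pos hC₀ hK), ?_⟩
  intro T hT u φ hconv hmono hu0 hdiff hrad htan x hx0 hx1 t ht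
  have hxball : x ∈ ball (0:EuclideanSpace ℝ (Fin n)) 1 := by
    rwa [mem_ball_zero_iff]
  have hxne : ‖x‖ ≠ 0 := ne_of_gt hx0
  set f : EuclideanSpace ℝ (Fin n) → ℝ := fun y => u y t with hf
  -- basic facts about l • x for l ∈ Ioo 0 1
  have hnorm : ∀ l : ℝ, 0 < l → ‖l • x‖ = l * ‖x‖ := by
    intro l hl
    rw [norm_smul, Real.norm_eq_abs, abs_of_pos hl]
  have hmem : ∀ l ∈ Ioo (0:ℝ) 1, 0 < ‖l • x‖ ∧ ‖l • x‖ < 1 := by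
    intro l hl
    rw [hnorm l hl.1]
    constructor
    · exact mul_pos hl.1 hx0
    · calc l * ‖x‖ < 1 * 1 := by
            apply mul_lt_mul' hl.2.le hx1 (norm_nonneg x) zero_lt_one
      _ = 1 := by ring
  have hd : ∀ l ∈ Ioo (0:ℝ) 1, DifferentiableAt ℝ f (l • x) ∧
      DifferentiableAt ℝ (fderiv ℝ f) (l • x) := by
    intro l hl
    exact hdiff (l • x) (hmem l hl).1 (hmem l hl).2 t ht
  -- the curve l ↦ l • x
  have hc : ∀ l : ℝ, HasDerivAt (fun l : ℝ => l • x) x l := by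
    intro l
    simpa using (hasDerivAt_id l).smul_const x
  set g : ℝ → ℝ := fun l => u (l • x) t with hg
  set g1 : ℝ → ℝ := fun l => fderiv ℝ f (l • x) x with hg1def
  set g2 : ℝ → ℝ := fun l => fderiv ℝ (fderiv ℝ f) (l • x) x x with hg2def
  have hg1 : ∀ l ∈ Ioo (0:ℝ) 1, HasDerivAt g (g1 l) l := by
    intro l hl
    exact (hd l hl).1.hasFDerivAt.comp_hasDerivAt l (hc l)
  have hg2 : ∀ l ∈ Ioo (0:ℝ) 1, HasDerivAt g1 (g2 l) l := by
    intro l hl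
    have h1 : HasDerivAt (fun l : ℝ => fderiv ℝ f (l • x))
        (fderiv ℝ (fderiv ℝ f) (l • x) x) l :=
      (hd l hl).2.hasFDerivAt.comp_hasDerivAt l (hc l)
    have := h1.clm_apply (hasDerivAt_const l x)
    simpa using this
  -- identification of g2 with urr
  have hg2urr : ∀ l ∈ Ioo (0:ℝ) 1, g2 l = ‖x‖ ^ 2 * urr u (l • x) t := by
    intro l hl
    set F := fderiv ℝ (fderiv ℝ f) (l • x) with hF
    have hhess : ∀ i j, hess f (l • x) i j
        = F (EuclideanSpace.single i 1) (EuclideanSpace.single j 1) :=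
      stmt9_hess_eq f (l • x) (hd l hl).2
    have hsum : ∑ i, ∑ j, (l • x) i * (l • x) j * hess (fun y => u y t) (l • x) i j
        = l ^ 2 * (F x x) := by
      rw [stmt9_bilin_sum F x, Finset.mul_sum]
      refine Finset.sum_congr rfl fun i _ => ?_
      rw [Finset.mul_sum]
      refine Finset.sum_congr rfl fun j _ => ?_
      have hxi : (l • x) i = l * x i := rfl
      have hxj : (l • x) j = l * x j := rfl
      rw [hxi, hxj]
      have : hess (fun y => u y t) (l • x) i j = F (EuclideanSpace.single i 1)
          (EuclideanSpace.single j 1) := hhess i j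
      rw [this]
      ring
    have hden : ‖l • x‖ ^ 2 = l ^ 2 * ‖x‖ ^ 2 := by
      rw [hnorm l hl.1]; ring
    have hl2 : (l:ℝ) ^ 2 ≠ 0 := pow_ne_zero 2 hl.1.ne'
    show F x x = ‖x‖ ^ 2 * urr u (l • x) t
    rw [urr, hsum, hden]
    field_simp
    ring_nf
    rw [mul_assoc, mul_inv_cancel₀ hl.1.ne', mul_one]
  -- bounds for g2
  have hrpow_smul : ∀ l ∈ Ioo (0:ℝ) 1,
      ‖l • x‖ ^ ((n:ℝ) - 1 - 1 / p) = l ^ (β - 2) * ‖x‖ ^ (β - 2) := by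
    intro l hl
    have : (n:ℝ) - 1 - 1 / p = β - 2 := by rw [hβdef]; ring
    rw [hnorm l hl.1, this, Real.mul_rpow hl.1.le (norm_nonneg x)]
  have hxpow : ‖x‖ ^ 2 * ‖x‖ ^ (β - 2) = ‖x‖ ^ β := by
    rw [← Real.rpow_natCast ‖x‖ 2, ← Real.rpow_add hx0]
    norm_num
  have hgup : ∀ l ∈ Ioo (0:ℝ) 1, g2 l ≤ C₀ * ‖x‖ ^ β * l ^ (β - 2) := by
    intro l hl
    have h := (hrad (l • x) (hmem l hl).1 (hmem l hl).2 t ht).2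
    rw [hrpow_smul l hl] at h
    rw [hg2urr l hl]
    calc ‖x‖ ^ 2 * urr u (l • x) t ≤ ‖x‖ ^ 2 * (C₀ * (l ^ (β - 2) * ‖x‖ ^ (β - 2))) := by
          apply mul_le_mul_of_nonneg_left h (by positivity)
      _ = C₀ * (‖x‖ ^ 2 * ‖x‖ ^ (β - 2)) * l ^ (β - 2) := by ring
      _ = C₀ * ‖x‖ ^ β * l ^ (β - 2) := by rw [hxpow]
  have hglo : ∀ l ∈ Ioo (0:ℝ) 1, C₀⁻¹ * ‖x‖ ^ β * l ^ (β - 2) ≤ g2 l := by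
    intro l hl
    have h := (hrad (l • x) (hmem l hl).1 (hmem l hl).2 t ht).1
    rw [hrpow_smul l hl] at h
    rw [hg2urr l hl]
    calc C₀⁻¹ * ‖x‖ ^ β * l ^ (β - 2)
        = ‖x‖ ^ 2 * (C₀⁻¹ * (l ^ (β - 2) * ‖x‖ ^ (β - 2))) := by rw [← hxpow]; ring
      _ ≤ ‖x‖ ^ 2 * urr u (l • x) t := by
          apply mul_le_mul_of_nonneg_left h (by positivity)
  -- tangent cone limit and continuity at 1
  have hφlim : Tendsto (fun l : ℝ => g l / l) (𝓝[>] (0:ℝ)) (𝓝 (φ x t)) :=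
    htan x hxball t ht
  have hgcont : ContinuousAt g 1 := by
    have hdx := (hdiff x hx0 hx1 t ht).1
    have h1 : ContinuousAt f ((1:ℝ) • x) := by
      rw [one_smul]; exact hdx.continuousAt
    have h2 : ContinuousAt (fun l : ℝ => l • x) 1 := (hc 1).continuousAt
    have h3 : ContinuousAt (f ∘ fun l : ℝ => l • x) 1 :=
      ContinuousAt.comp (g := f) (f := fun l : ℝ => l • x) (x := (1:ℝ)) h1 h2
    exact h3
  have hg1eq : g 1 = u x t := by
    show u ((1:ℝ) • x) t = u x t
    rw [one_smul]
  have hxβ : (0:ℝ) < ‖x‖ ^ β := Real.rpow_pos_of_pos hx0 β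
  -- upper bound
  have hupper : u x t - φ x t ≤ C₀ * ‖x‖ ^ β / K := by
    have hb : ∀ l ∈ Ioo (0:ℝ) 1,
        g2 l ≤ C₀ * ‖x‖ ^ β / K * (β * (β - 1)) * l ^ (β - 2) := by
      intro l hl
      have heq : C₀ * ‖x‖ ^ β / K * (β * (β - 1)) * l ^ (β - 2)
          = C₀ * ‖x‖ ^ β * l ^ (β - 2) := by
        rw [← hKdef]; first
          | (field_simp; ring)
          | field_simp
      rw [heq]
      exact hgup l hl
    have := stmt9_key g g1 g2 (C₀ * ‖x‖ ^ β / K) β (φ x t) hβ hg1 hg2 hb hφlim hgcont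
    rw [hg1eq] at this; exact this
  -- lower bound
  have hlower : C₀⁻¹ * ‖x‖ ^ β / K ≤ u x t - φ x t := by
    have hb : ∀ l ∈ Ioo (0:ℝ) 1,
        -(g2 l) ≤ -(C₀⁻¹ * ‖x‖ ^ β / K) * (β * (β - 1)) * l ^ (β - 2) := by
      intro l hl
      have heq : -(C₀⁻¹ * ‖x‖ ^ β / K) * (β * (β - 1)) * l ^ (β - 2)
          = -(C₀⁻¹ * ‖x‖ ^ β * l ^ (β - 2)) := by
        rw [← hKdef]; first
          | (field_simp; ring)
          | field_simp
      rw [heq]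
      have := hglo l hl
      linarith
    have hφ' : Tendsto (fun l : ℝ => -(g l) / l) (𝓝[>] (0:ℝ)) (𝓝 (-(φ x t))) := by
      have := hφlim.neg
      refine this.congr' ?_
      filter_upwards [self_mem_nhdsWithin] with l hl
      rw [neg_div]
    have hkey := stmt9_key (fun l => -(g l)) (fun l => -(g1 l)) (fun l => -(g2 l))
      (-(C₀⁻¹ * ‖x‖ ^ β / K)) β (-(φ x t)) hβ
      (fun l hl => (hg1 l hl).neg) (fun l hl => (hg2 l hl).neg) hb hφ' hgcont.neg
    have hkey' : -(u x t) - -(φ x t) ≤ -(C₀⁻¹ * ‖x‖ ^ β / K) := by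
      simpa [hg1eq] using hkey
    linarith
  -- conclusion
  constructor
  · have hCK : (C₀ * K + C₀ / K)⁻¹ ≤ C₀⁻¹ / K := by
      have h1 : (C₀ * K)⁻¹ = C₀⁻¹ / K := by rw [mul_inv, div_eq_mul_inv]
      rw [← h1]
      exact inv_anti₀ (mul_pos hC₀ hK)
        (le_add_of_nonneg_right (div_pos hC₀ hK).le)
    calc (C₀ * K + C₀ / K)⁻¹ * ‖x‖ ^ β ≤ (C₀⁻¹ / K) * ‖x‖ ^ β := by
          apply mul_le_mul_of_nonneg_right hCK hxβ.le
      _ = C₀⁻¹ * ‖x‖ ^ β / K := by ring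
      _ ≤ u x t - φ x t := hlower
  · calc u x t - φ x t ≤ C₀ * ‖x‖ ^ β / K := hupper
      _ = (C₀ / K) * ‖x‖ ^ β := by ring
      _ ≤ (C₀ * K + C₀ / K) * ‖x‖ ^ β := by
          apply mul_le_mul_of_nonneg_right _ hxβ.le
          nlinarith
end
end
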